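/- (Theorem 2, convergence rates.) Under the stated setup, let α* ∈ ℝⁿ and ω* ∈ ℝ^p satisfy Z·α* = 0 and Φ(a) + ⟨ω*, Z·a⟩ ≥ Φ(α*) for all a ∈ ℝⁿ. Set Ξ := 4(1+d)·λ_max(S⁻¹)·‖ω*‖² + (1+d)·ω(0)ᵀS⁻¹ω(0) + ½·(α* − α(0))ᵀC⁻¹(α* − α(0)) + Γ/2. Then for every natural number T ≥ 2d+1: ‖ω*‖·‖Z·ᾱ(T+1)‖ ≤ Ξ/(T+1) and |Φ(ᾱ(T+1)) − Φ(α*)| ≤ Ξ/(T+1). -/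

import Mathlib

open Matrix Finset

/-- The quadratic form `‖x‖²_A = xᵀ A x`. -/
noncomputable def qf {k : ℕ} (A : Matrix (Fin k) (Fin k) ℝ) (x : Fin k → ℝ) : ℝ :=
  x ⬝ᵥ (A *ᵥ x)

/-- The largest eigenvalue of a real symmetric matrix, as the supremum of the
quadratic form over Euclidean unit vectors. -/
noncomputable def lamMax {k : ℕ} (A : Matrix (Fin k) (Fin k) ℝ) : ℝ :=
  sSup {r : ℝ | ∃ x : Fin k → ℝ, x ⬝ᵥ x = 1 ∧ r = x ⬝ᵥ (A *ᵥ x)}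

section Aux

variable {k m : ℕ}

lemma qf_nonneg {A : Matrix (Fin k) (Fin k) ℝ} (hA : A.PosSemidef) (x : Fin k → ℝ) :
    0 ≤ qf A x := by
  have := hA.dotProduct_mulVec_nonneg x; simpa [qf] using this

lemma transpose_eq_of_posdef {A : Matrix (Fin k) (Fin k) ℝ} (hA : A.PosDef) : Aᵀ = A := by
  have := hA.1; unfold Matrix.IsHermitian at this
  rwa [Matrix.conjTranspose_eq_transpose_of_trivial] at this

lemma ip_symm {A : Matrix (Fin k) (Fin k) ℝ} (hA : Aᵀ = A) (x y : Fin k → ℝ) :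
    x ⬝ᵥ (A *ᵥ y) = y ⬝ᵥ (A *ᵥ x) := by
  conv_lhs => rw [← hA]
  rw [dotProduct_mulVec, vecMul_transpose, dotProduct_comm]

lemma dot_self_nonneg (x : Fin k → ℝ) : 0 ≤ x ⬝ᵥ x :=
  Finset.sum_nonneg fun i _ => mul_self_nonneg (x i)

lemma qf_add {A : Matrix (Fin k) (Fin k) ℝ} (hA : Aᵀ = A) (x y : Fin k → ℝ) :
    qf A (x + y) = qf A x + 2 * (x ⬝ᵥ (A *ᵥ y)) + qf A y := by
  have h := ip_symm hA y x
  simp only [qf, mulVec_add, dotProduct_add, add_dotProduct]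
  linarith

lemma qf_sub {A : Matrix (Fin k) (Fin k) ℝ} (hA : Aᵀ = A) (x y : Fin k → ℝ) :
    qf A (x - y) = qf A x - 2 * (x ⬝ᵥ (A *ᵥ y)) + qf A y := by
  have h := ip_symm hA y x
  simp only [qf, mulVec_sub, dotProduct_sub, sub_dotProduct]
  linarith

lemma qf_smul (A : Matrix (Fin k) (Fin k) ℝ) (c : ℝ) (x : Fin k → ℝ) :
    qf A (c • x) = c ^ 2 * qf A x := by
  simp [qf, mulVec_smul, dotProduct_smul, smul_dotProduct, smul_eq_mul]; ring

/-- three-point identity -/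
lemma ip_three {A : Matrix (Fin k) (Fin k) ℝ} (hA : Aᵀ = A) (a b c : Fin k → ℝ) :
    (a - c) ⬝ᵥ (A *ᵥ (c - b)) = 1 / 2 * (qf A (a - b) - qf A (a - c) - qf A (c - b)) := by
  have h1 : a - b = (a - c) + (c - b) := by abel
  rw [h1, qf_add hA]; ring

/-- Young's inequality for a PSD quadratic form. -/
lemma ip_young {A : Matrix (Fin k) (Fin k) ℝ} (hA : A.PosSemidef) (hAs : Aᵀ = A)
    {c : ℝ} (hc : 0 < c) (x y : Fin k → ℝ) :
    x ⬝ᵥ (A *ᵥ y) ≤ c / 2 * qf A x + 1 / (2 * c) * qf A y := by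
  have h0 : 0 ≤ qf A (c • x - y) := qf_nonneg hA _
  rw [qf_sub hAs, qf_smul] at h0
  have h1 : (c • x) ⬝ᵥ (A *ᵥ y) = c * (x ⬝ᵥ (A *ᵥ y)) := by
    simp [smul_dotProduct, smul_eq_mul]
  rw [h1] at h0
  have hc' : 0 < 2 * c := by linarith
  rw [← sub_nonneg]
  have key : c / 2 * qf A x + 1 / (2 * c) * qf A y - x ⬝ᵥ (A *ᵥ y)
      = (1 / (2 * c)) * (c ^ 2 * qf A x - 2 * (c * (x ⬝ᵥ (A *ᵥ y))) + qf A y) := by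
    field_simp; ring
  rw [key]
  positivity
  
lemma qf_le_lamMax (A : Matrix (Fin k) (Fin k) ℝ) (x : Fin k → ℝ) :
    qf A x ≤ lamMax A * (x ⬝ᵥ x) := by
  have hbdd : BddAbove {r : ℝ | ∃ x : Fin k → ℝ, x ⬝ᵥ x = 1 ∧ r = x ⬝ᵥ (A *ᵥ x)} := by
    refine ⟨∑ i, ∑ j, |A i j|, ?_⟩
    rintro r ⟨y, hy1, rfl⟩
    have hyb : ∀ i, |y i| ≤ 1 := by
      intro i
      have h1 : y i * y i ≤ 1 := by
        rw [← hy1]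
        exact Finset.single_le_sum (f := fun j => y j * y j)
          (fun j _ => mul_self_nonneg _) (Finset.mem_univ i)
      nlinarith [abs_nonneg (y i), sq_abs (y i)]
    calc y ⬝ᵥ (A *ᵥ y) = ∑ i, ∑ j, y i * (A i j * y j) := by
          simp [dotProduct, Matrix.mulVec, Finset.mul_sum]
      _ ≤ ∑ i, ∑ j, |A i j| := by
          refine Finset.sum_le_sum fun i _ => Finset.sum_le_sum fun j _ => ?_
          calc y i * (A i j * y j) ≤ |y i * (A i j * y j)| := le_abs_self _
            _ = |y i| * |A i j| * |y j| := by rw [abs_mul, abs_mul]; ring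
            _ ≤ 1 * |A i j| * 1 := by
                apply mul_le_mul (mul_le_mul (hyb i) le_rfl (abs_nonneg _) zero_le_one)
                  (hyb j) (abs_nonneg _)
                positivity
            _ = |A i j| := by ring
  by_cases hx : x = 0
  · simp [hx, qf, lamMax]
  · have hxx : 0 < x ⬝ᵥ x := by
      rcases lt_or_eq_of_le (dot_self_nonneg x) with h | h
      · exact h
      · exact absurd ((dotProduct_self_eq_zero).1 h.symm) hx
    set s : ℝ := Real.sqrt (x ⬝ᵥ x) with hs
    have hspos : 0 < s := Real.sqrt_pos.2 hxx
    have hs2 : s ^ 2 = x ⬝ᵥ x := Real.sq_sqrt (le_of_lt hxx)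
    set u : Fin k → ℝ := s⁻¹ • x with hu
    have huu : u ⬝ᵥ u = 1 := by
      rw [hu]
      simp [smul_dotProduct, dotProduct_smul, smul_eq_mul]
      field_simp
      rw [← hs2]
    have hmem : u ⬝ᵥ (A *ᵥ u) ∈ {r : ℝ | ∃ x : Fin k → ℝ, x ⬝ᵥ x = 1 ∧ r = x ⬝ᵥ (A *ᵥ x)} :=
      ⟨u, huu, rfl⟩
    have hle : u ⬝ᵥ (A *ᵥ u) ≤ lamMax A := le_csSup hbdd hmem
    have hqfu : qf A u = (x ⬝ᵥ x)⁻¹ * qf A x := by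
      rw [hu, qf_smul]
      congr 1
      rw [← hs2]; field_simp
    have : qf A u ≤ lamMax A := hle
    rw [hqfu] at this
    calc qf A x = (x ⬝ᵥ x) * ((x ⬝ᵥ x)⁻¹ * qf A x) := by field_simp
      _ ≤ (x ⬝ᵥ x) * lamMax A := by
          exact mul_le_mul_of_nonneg_left this (le_of_lt hxx)
      _ = lamMax A * (x ⬝ᵥ x) := by ring

lemma lamMax_nonneg_of_posdef {A : Matrix (Fin k) (Fin k) ℝ} (hA : A.PosDef) :
    0 ≤ lamMax A := by
  rcases Nat.eq_zero_or_pos k with hk | hk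
  · subst hk
    have : {r : ℝ | ∃ x : Fin 0 → ℝ, x ⬝ᵥ x = 1 ∧ r = x ⬝ᵥ (A *ᵥ x)} = ∅ := by
      ext r; simp [dotProduct]
    rw [lamMax, this, Real.sSup_empty]
  · -- unit vector exists
    have hbdd : BddAbove {r : ℝ | ∃ x : Fin k → ℝ, x ⬝ᵥ x = 1 ∧ r = x ⬝ᵥ (A *ᵥ x)} := by
      -- reuse: bound proof as in qf_le_lamMax; restate via qf_le_lamMax trick
      refine ⟨∑ i, ∑ j, |A i j|, ?_⟩
      rintro r ⟨y, hy1, rfl⟩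
      have hyb : ∀ i, |y i| ≤ 1 := by
        intro i
        have h1 : y i * y i ≤ 1 := by
          rw [← hy1]
          exact Finset.single_le_sum (f := fun j => y j * y j)
            (fun j _ => mul_self_nonneg _) (Finset.mem_univ i)
        nlinarith [abs_nonneg (y i), sq_abs (y i)]
      calc y ⬝ᵥ (A *ᵥ y) = ∑ i, ∑ j, y i * (A i j * y j) := by
            simp [dotProduct, Matrix.mulVec, Finset.mul_sum]
        _ ≤ ∑ i, ∑ j, |A i j| := by
            refine Finset.sum_le_sum fun i _ => Finset.sum_le_sum fun j _ => ?_
            calc y i * (A i j * y j) ≤ |y i * (A i j * y j)| := le_abs_self _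
              _ = |y i| * |A i j| * |y j| := by rw [abs_mul, abs_mul]; ring
              _ ≤ 1 * |A i j| * 1 := by
                  apply mul_le_mul (mul_le_mul (hyb i) le_rfl (abs_nonneg _) zero_le_one)
                    (hyb j) (abs_nonneg _)
                  positivity
              _ = |A i j| := by ring
    have i0 : Fin k := ⟨0, hk⟩
    set e : Fin k → ℝ := Pi.single i0 1 with he
    have hee : e ⬝ᵥ e = 1 := by
      rw [he]
      simp [dotProduct, Pi.single_apply]
    have hne : e ≠ 0 := by
      intro h
      have := congrFun h i0
      simp [he, Pi.single_apply] at this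
    have hmem : e ⬝ᵥ (A *ᵥ e) ∈ {r : ℝ | ∃ x : Fin k → ℝ, x ⬝ᵥ x = 1 ∧ r = x ⬝ᵥ (A *ᵥ x)} :=
      ⟨e, hee, rfl⟩
    have hpos : 0 < e ⬝ᵥ (A *ᵥ e) := by
      have := hA.dotProduct_mulVec_pos hne
      simpa using this
    exact le_trans (le_of_lt hpos) (le_csSup hbdd hmem)

lemma nonneg_of_theta {A B : ℝ} (hB : 0 ≤ B)
    (h : ∀ θ : ℝ, 0 < θ → θ ≤ 1 → 0 ≤ θ * A + θ ^ 2 * B) : 0 ≤ A := by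
  by_contra hA
  push_neg at hA
  set θ := min 1 (-A / (2 * B + 1)) with hθdef
  have hθpos : 0 < θ :=
    lt_min one_pos (div_pos (neg_pos.2 hA) (by linarith))
  have hθ1 : θ ≤ 1 := min_le_left _ _
  have h2 : θ ≤ -A / (2 * B + 1) := min_le_right _ _
  have h3 : θ * (2 * B + 1) ≤ -A := by
    rw [← le_div_iff₀ (by linarith : (0:ℝ) < 2 * B + 1)]
    exact h2
  have h4 := h θ hθpos hθ1
  nlinarith [mul_pos hθpos hθpos, mul_le_mul_of_nonneg_left h3 (le_of_lt hθpos)]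

lemma sum_dot_left {k : ℕ} (s : Finset ℕ) (v : ℕ → Fin k → ℝ) (w : Fin k → ℝ) :
    (∑ i ∈ s, v i) ⬝ᵥ w = ∑ i ∈ s, v i ⬝ᵥ w := by
  simp [dotProduct, Finset.sum_apply, Finset.sum_mul]
  rw [Finset.sum_comm]

lemma mulVec_sumv {k m : ℕ} (A : Matrix (Fin k) (Fin m) ℝ) (s : Finset ℕ) (v : ℕ → Fin m → ℝ) :
    A *ᵥ (∑ i ∈ s, v i) = ∑ i ∈ s, A *ᵥ v i := by
  rw [← Matrix.mulVecLin_apply, map_sum]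
  simp [Matrix.mulVecLin_apply]

lemma cauchy_dot (k : ℕ) (x y : Fin k → ℝ) :
    x ⬝ᵥ y ≤ Real.sqrt (x ⬝ᵥ x) * Real.sqrt (y ⬝ᵥ y) := by
  have h1 : (∑ i, x i * y i) ^ 2 ≤ (∑ i, x i ^ 2) * ∑ i, y i ^ 2 :=
    Finset.sum_mul_sq_le_sq_mul_sq _ _ _
  have hx : x ⬝ᵥ x = ∑ i, x i ^ 2 := by simp [dotProduct, sq]
  have hy : y ⬝ᵥ y = ∑ i, y i ^ 2 := by simp [dotProduct, sq]
  have h2 : x ⬝ᵥ y ≤ Real.sqrt ((x ⬝ᵥ y) ^ 2) := by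
    rw [Real.sqrt_sq_eq_abs]; exact le_abs_self _
  calc x ⬝ᵥ y ≤ Real.sqrt ((x ⬝ᵥ y) ^ 2) := h2
    _ ≤ Real.sqrt ((x ⬝ᵥ x) * (y ⬝ᵥ y)) := by
        apply Real.sqrt_le_sqrt
        rw [hx, hy]
        simpa [dotProduct] using h1
    _ = Real.sqrt (x ⬝ᵥ x) * Real.sqrt (y ⬝ᵥ y) := Real.sqrt_mul (dot_self_nonneg x) _

end Aux
lemma prox_VI (n p : ℕ) (Z : Matrix (Fin p) (Fin n) ℝ)
    (C : Matrix (Fin n) (Fin n) ℝ) (S : Matrix (Fin p) (Fin p) ℝ)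
    (hC : C.PosDef) (d : ℕ)
    (Hr : (Fin n → ℝ) → ℝ) (gs : (Fin n → ℝ) → (Fin n → ℝ))
    (hr : ConvexOn ℝ Set.univ Hr)
    (α : ℕ → Fin n → ℝ) (ω : ℕ → Fin p → ℝ)
    (hα : ∀ t : ℕ, ∀ v : Fin n → ℝ,
      Hr (α (t + 1)) + 1 / 2 * qf C⁻¹ (α (t + 1) -
          (α t - C *ᵥ (gs (α t) + Zᵀ *ᵥ ω (t - d) + (Zᵀ * S * Z) *ᵥ α (t - d))))
        ≤ Hr v + 1 / 2 * qf C⁻¹ (v -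
          (α t - C *ᵥ (gs (α t) + Zᵀ *ᵥ ω (t - d) + (Zᵀ * S * Z) *ᵥ α (t - d)))))
    (u : ℕ → Fin n → ℝ)
    (hu : ∀ s, u s = gs (α s) + Zᵀ *ᵥ ω (s - d) + (Zᵀ * S * Z) *ᵥ α (s - d)) :
    ∀ (t : ℕ) (v : Fin n → ℝ),
      Hr (α (t + 1)) + (v - α (t + 1)) ⬝ᵥ (C⁻¹ *ᵥ (α t - α (t + 1)) - u t) ≤ Hr v := by
  have hCiPD : (C⁻¹).PosDef := hC.inv
  have hCis : (C⁻¹)ᵀ = C⁻¹ := transpose_eq_of_posdef hCiPD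
  have hCiC : C⁻¹ * C = 1 := Matrix.nonsing_inv_mul C (isUnit_iff_ne_zero.2 hC.det_pos.ne')
  have hCipsd := hCiPD.posSemidef
  intro t v
  have hCiCu : C⁻¹ *ᵥ (C *ᵥ u t) = u t := by
    rw [Matrix.mulVec_mulVec, hCiC, Matrix.one_mulVec]
  have hkey : ∀ θ : ℝ, 0 < θ → θ ≤ 1 →
      0 ≤ θ * (Hr v - Hr (α (t + 1))
          + (α (t + 1) - (α t - C *ᵥ u t)) ⬝ᵥ (C⁻¹ *ᵥ (v - α (t + 1))))
        + θ ^ 2 * (1 / 2 * qf C⁻¹ (v - α (t + 1))) := by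
    intro θ hθ hθ1
    have hmix : α (t + 1) + θ • (v - α (t + 1)) = (1 - θ) • α (t + 1) + θ • v := by
      rw [sub_smul, one_smul, smul_sub]; abel
    have hconv' : Hr (α (t + 1) + θ • (v - α (t + 1))) ≤ (1 - θ) * Hr (α (t + 1)) + θ * Hr v := by
      rw [hmix]
      have := hr.2 (Set.mem_univ (α (t + 1))) (Set.mem_univ v) (by linarith : (0:ℝ) ≤ 1 - θ)
        (le_of_lt hθ) (by ring)
      simpa [smul_eq_mul] using this
    have hqe : qf C⁻¹ (α (t + 1) + θ • (v - α (t + 1)) - (α t - C *ᵥ u t))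
        = qf C⁻¹ (α (t + 1) - (α t - C *ᵥ u t))
          + 2 * (θ * ((α (t + 1) - (α t - C *ᵥ u t)) ⬝ᵥ (C⁻¹ *ᵥ (v - α (t + 1)))))
          + θ ^ 2 * qf C⁻¹ (v - α (t + 1)) := by
      have h1 : α (t + 1) + θ • (v - α (t + 1)) - (α t - C *ᵥ u t)
          = (α (t + 1) - (α t - C *ᵥ u t)) + θ • (v - α (t + 1)) := by abel
      rw [h1, qf_add hCis, qf_smul]
      have h2 : (α (t + 1) - (α t - C *ᵥ u t)) ⬝ᵥ (C⁻¹ *ᵥ (θ • (v - α (t + 1))))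
          = θ * ((α (t + 1) - (α t - C *ᵥ u t)) ⬝ᵥ (C⁻¹ *ᵥ (v - α (t + 1)))) := by
        rw [Matrix.mulVec_smul]
        simp [smul_eq_mul]
      rw [h2]
    have hmin := hα t (α (t + 1) + θ • (v - α (t + 1)))
    rw [← hu t] at hmin
    rw [hqe] at hmin
    nlinarith [hmin, hconv']
  have hfin : 0 ≤ Hr v - Hr (α (t + 1))
      + (α (t + 1) - (α t - C *ᵥ u t)) ⬝ᵥ (C⁻¹ *ᵥ (v - α (t + 1))) :=
    nonneg_of_theta (mul_nonneg (by norm_num) (qf_nonneg hCipsd _)) hkey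
  have e1 : (α (t + 1) - (α t - C *ᵥ u t)) ⬝ᵥ (C⁻¹ *ᵥ (v - α (t + 1)))
      = (v - α (t + 1)) ⬝ᵥ (C⁻¹ *ᵥ (α (t + 1) - (α t - C *ᵥ u t))) := ip_symm hCis _ _
  have e2 : α (t + 1) - (α t - C *ᵥ u t) = (α (t + 1) - α t) + C *ᵥ u t := by abel
  have e3 : C⁻¹ *ᵥ (α (t + 1) - (α t - C *ᵥ u t)) = C⁻¹ *ᵥ (α (t + 1) - α t) + u t := by
    rw [e2, Matrix.mulVec_add, hCiCu]
  have e5 : (v - α (t + 1)) ⬝ᵥ (C⁻¹ *ᵥ (α (t + 1) - (α t - C *ᵥ u t)))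
      = (v - α (t + 1)) ⬝ᵥ (C⁻¹ *ᵥ (α (t + 1) - α t)) + (v - α (t + 1)) ⬝ᵥ u t := by
    rw [e3, dotProduct_add]
  have e4 : C⁻¹ *ᵥ (α t - α (t + 1)) = - (C⁻¹ *ᵥ (α (t + 1) - α t)) := by
    rw [show α t - α (t + 1) = -(α (t + 1) - α t) from by abel, Matrix.mulVec_neg]
  have e6 : (v - α (t + 1)) ⬝ᵥ (C⁻¹ *ᵥ (α t - α (t + 1)) - u t)
      = -((v - α (t + 1)) ⬝ᵥ (C⁻¹ *ᵥ (α (t + 1) - α t))) - (v - α (t + 1)) ⬝ᵥ u t := by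
    rw [dotProduct_sub, e4, dotProduct_neg]
  linarith [hfin, e1, e5, e6]
lemma dot_sum_right {k : ℕ} (s : Finset ℕ) (w : Fin k → ℝ) (v : ℕ → Fin k → ℝ) :
    w ⬝ᵥ (∑ i ∈ s, v i) = ∑ i ∈ s, w ⬝ᵥ v i := by
  rw [dotProduct_comm, sum_dot_left]
  exact Finset.sum_congr rfl fun i _ => dotProduct_comm _ _

lemma per_step
    {n p : ℕ} (Z : Matrix (Fin p) (Fin n) ℝ)
    (C Hm : Matrix (Fin n) (Fin n) ℝ) (S : Matrix (Fin p) (Fin p) ℝ)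
    (hSs : Sᵀ = S) (hCis : (C⁻¹)ᵀ = C⁻¹) (hSis : (S⁻¹)ᵀ = S⁻¹)
    (hSiS : S⁻¹ * S = 1) (hSpsd : S.PosSemidef)
    (d : ℕ)
    (Hs Hr : (Fin n → ℝ) → ℝ) (gs : (Fin n → ℝ) → (Fin n → ℝ))
    (hconv_s : ∀ a b : Fin n → ℝ, Hs a + gs a ⬝ᵥ (b - a) ≤ Hs b)
    (hsmooth : ∀ a b : Fin n → ℝ, Hs b ≤ Hs a + gs a ⬝ᵥ (b - a) + 1 / 2 * qf Hm (b - a))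
    (α : ℕ → Fin n → ℝ) (ω : ℕ → Fin p → ℝ)
    (hω : ∀ t : ℕ, ω (t + 1) = ω (t - d) + (S * Z) *ᵥ α (t + 1))
    (αs : Fin n → ℝ) (hαs : Z *ᵥ αs = 0) (ν : Fin p → ℝ)
    (VI : ∀ (t : ℕ) (v : Fin n → ℝ),
      Hr (α (t + 1)) + (v - α (t + 1)) ⬝ᵥ (C⁻¹ *ᵥ (α t - α (t + 1))
        - (gs (α t) + Zᵀ *ᵥ ω (t - d) + (Zᵀ * S * Z) *ᵥ α (t - d))) ≤ Hr v)
    (t : ℕ) :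
    (Hs (α (t + 1)) + Hr (α (t + 1))) - (Hs αs + Hr αs) + ν ⬝ᵥ (Z *ᵥ α (t + 1))
      ≤ 1 / 2 * qf Hm (α (t + 1) - α t) - 1 / 2 * qf C⁻¹ (α (t + 1) - α t)
        + (1 / 2 * qf C⁻¹ (αs - α t) - 1 / 2 * qf C⁻¹ (αs - α (t + 1)))
        + (1 / 2 * qf S⁻¹ (ν - ω (t - d)) - 1 / 2 * qf S⁻¹ (ν - ω (t + 1)))
        + ((d : ℝ) + 1) / 2 * ∑ j ∈ Finset.Ico (t - d) (t + 1), qf S (Z *ᵥ (α (j + 1) - α j)) := by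
  set c : ℝ := (d : ℝ) + 1 with hc
  have hcpos : (0 : ℝ) < c := by positivity
  have h1 := hsmooth (α t) (α (t + 1))
  have h2 := hconv_s (α t) αs
  have h0 := VI t αs
  set U : Fin n → ℝ := gs (α t) + Zᵀ *ᵥ ω (t - d) + (Zᵀ * S * Z) *ᵥ α (t - d) with hU
  -- gradient terms cancel
  have egs : gs (α t) ⬝ᵥ (α (t + 1) - α t) + (αs - α (t + 1)) ⬝ᵥ gs (α t)
      = gs (α t) ⬝ᵥ (αs - α t) := by
    rw [dotProduct_comm (αs - α (t + 1)), ← dotProduct_add]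
    congr 1; abel
  -- split the VI pairing
  have eX : (αs - α (t + 1)) ⬝ᵥ (C⁻¹ *ᵥ (α t - α (t + 1)) - U)
      = (αs - α (t + 1)) ⬝ᵥ (C⁻¹ *ᵥ (α t - α (t + 1))) - (αs - α (t + 1)) ⬝ᵥ U :=
    dotProduct_sub _ _ _
  have eZ : Z *ᵥ (αs - α (t + 1)) = -(Z *ᵥ α (t + 1)) := by
    rw [Matrix.mulVec_sub, hαs]; simp
  have eU1 : (αs - α (t + 1)) ⬝ᵥ U
      = (αs - α (t + 1)) ⬝ᵥ gs (α t) + (αs - α (t + 1)) ⬝ᵥ (Zᵀ *ᵥ ω (t - d))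
        + (αs - α (t + 1)) ⬝ᵥ ((Zᵀ * S * Z) *ᵥ α (t - d)) := by
    rw [hU, dotProduct_add, dotProduct_add]
  have eU2 : (αs - α (t + 1)) ⬝ᵥ (Zᵀ *ᵥ ω (t - d)) = -((Z *ᵥ α (t + 1)) ⬝ᵥ ω (t - d)) := by
    rw [dotProduct_mulVec, vecMul_transpose, eZ, neg_dotProduct]
  have eU3 : (αs - α (t + 1)) ⬝ᵥ ((Zᵀ * S * Z) *ᵥ α (t - d))
      = -((Z *ᵥ α (t + 1)) ⬝ᵥ (S *ᵥ (Z *ᵥ α (t - d)))) := by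
    rw [← Matrix.mulVec_mulVec, ← Matrix.mulVec_mulVec, dotProduct_mulVec, vecMul_transpose,
      eZ, neg_dotProduct]
  -- the C⁻¹ three-point identity
  have eC0 := ip_three hCis αs (α t) (α (t + 1))
  have eCneg : C⁻¹ *ᵥ (α t - α (t + 1)) = -(C⁻¹ *ᵥ (α (t + 1) - α t)) := by
    rw [show α t - α (t + 1) = -(α (t + 1) - α t) from by abel, Matrix.mulVec_neg]
  have eC : (αs - α (t + 1)) ⬝ᵥ (C⁻¹ *ᵥ (α t - α (t + 1)))
      = -(1 / 2 * (qf C⁻¹ (αs - α t) - qf C⁻¹ (αs - α (t + 1)) - qf C⁻¹ (α (t + 1) - α t))) := by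
    rw [eCneg, dotProduct_neg, eC0]
  -- dual update facts
  have eSZ : (S * Z) *ᵥ α (t + 1) = S *ᵥ (Z *ᵥ α (t + 1)) := by
    rw [Matrix.mulVec_mulVec]
  have ew : ω (t - d) = ω (t + 1) - S *ᵥ (Z *ᵥ α (t + 1)) := by
    rw [hω t, eSZ]; abel
  have ewd : ω (t + 1) - ω (t - d) = S *ᵥ (Z *ᵥ α (t + 1)) := by rw [ew]; abel
  have ezp : Z *ᵥ α (t + 1) = S⁻¹ *ᵥ (ω (t + 1) - ω (t - d)) := by
    rw [ewd, Matrix.mulVec_mulVec, hSiS, Matrix.one_mulVec]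
  have e3p := ip_three hSis ν (ω (t - d)) (ω (t + 1))
  have eq2 : qf S⁻¹ (ω (t + 1) - ω (t - d)) = qf S (Z *ᵥ α (t + 1)) := by
    unfold qf
    rw [← ezp, ewd, dotProduct_comm]
  have eN : (ν - ω (t + 1)) ⬝ᵥ (Z *ᵥ α (t + 1))
      = 1 / 2 * (qf S⁻¹ (ν - ω (t - d)) - qf S⁻¹ (ν - ω (t + 1)) - qf S (Z *ᵥ α (t + 1))) := by
    rw [ezp, e3p, ← ezp, eq2]
  have eB : ν ⬝ᵥ (Z *ᵥ α (t + 1)) - (Z *ᵥ α (t + 1)) ⬝ᵥ ω (t - d)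
      = (ν - ω (t + 1)) ⬝ᵥ (Z *ᵥ α (t + 1))
        + (Z *ᵥ α (t + 1)) ⬝ᵥ (S *ᵥ (Z *ᵥ α (t + 1))) := by
    have b1 : (Z *ᵥ α (t + 1)) ⬝ᵥ ω (t - d)
        = (Z *ᵥ α (t + 1)) ⬝ᵥ ω (t + 1) - (Z *ᵥ α (t + 1)) ⬝ᵥ (S *ᵥ (Z *ᵥ α (t + 1))) := by
      rw [ew, dotProduct_sub]
    have b2 : (ν - ω (t + 1)) ⬝ᵥ (Z *ᵥ α (t + 1))
        = ν ⬝ᵥ (Z *ᵥ α (t + 1)) - ω (t + 1) ⬝ᵥ (Z *ᵥ α (t + 1)) := sub_dotProduct _ _ _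
    have b3 : ω (t + 1) ⬝ᵥ (Z *ᵥ α (t + 1)) = (Z *ᵥ α (t + 1)) ⬝ᵥ ω (t + 1) :=
      dotProduct_comm _ _
    linarith
  -- cross term bound
  have htel : α (t + 1) - α (t - d) = ∑ j ∈ Finset.Ico (t - d) (t + 1), (α (j + 1) - α j) := by
    rw [Finset.sum_Ico_eq_sub _ (by omega : t - d ≤ t + 1), Finset.sum_range_sub α,
      Finset.sum_range_sub α]
    abel
  have esum : (Z *ᵥ α (t + 1)) ⬝ᵥ (S *ᵥ (Z *ᵥ (α (t + 1) - α (t - d))))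
      = ∑ j ∈ Finset.Ico (t - d) (t + 1),
          (Z *ᵥ α (t + 1)) ⬝ᵥ (S *ᵥ (Z *ᵥ (α (j + 1) - α j))) := by
    rw [htel, mulVec_sumv, mulVec_sumv, dot_sum_right]
  have ecross2 : (Z *ᵥ α (t + 1)) ⬝ᵥ (S *ᵥ (Z *ᵥ (α (t + 1) - α (t - d))))
      = (Z *ᵥ α (t + 1)) ⬝ᵥ (S *ᵥ (Z *ᵥ α (t + 1)))
        - (Z *ᵥ α (t + 1)) ⬝ᵥ (S *ᵥ (Z *ᵥ α (t - d))) := by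
    rw [Matrix.mulVec_sub, Matrix.mulVec_sub, dotProduct_sub]
  have hqfzp : 0 ≤ qf S (Z *ᵥ α (t + 1)) := qf_nonneg hSpsd _
  have hcard : ((Finset.Ico (t - d) (t + 1)).card : ℝ) ≤ c := by
    rw [Nat.card_Ico, hc]
    have h : (t + 1) - (t - d) ≤ d + 1 := by omega
    calc (((t + 1) - (t - d) : ℕ) : ℝ) ≤ ((d + 1 : ℕ) : ℝ) := by exact_mod_cast h
      _ = (d : ℝ) + 1 := by push_cast; ring
  have hyoung : ∀ j ∈ Finset.Ico (t - d) (t + 1),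
      (Z *ᵥ α (t + 1)) ⬝ᵥ (S *ᵥ (Z *ᵥ (α (j + 1) - α j)))
        ≤ c / 2 * qf S (Z *ᵥ (α (j + 1) - α j)) + 1 / (2 * c) * qf S (Z *ᵥ α (t + 1)) := by
    intro j _
    rw [ip_symm hSs]
    exact ip_young hSpsd hSs hcpos _ _
  have hsumb : ∑ j ∈ Finset.Ico (t - d) (t + 1),
        (Z *ᵥ α (t + 1)) ⬝ᵥ (S *ᵥ (Z *ᵥ (α (j + 1) - α j)))
      ≤ c / 2 * (∑ j ∈ Finset.Ico (t - d) (t + 1), qf S (Z *ᵥ (α (j + 1) - α j)))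
        + ((Finset.Ico (t - d) (t + 1)).card : ℝ) * (1 / (2 * c) * qf S (Z *ᵥ α (t + 1))) := by
    calc ∑ j ∈ Finset.Ico (t - d) (t + 1),
          (Z *ᵥ α (t + 1)) ⬝ᵥ (S *ᵥ (Z *ᵥ (α (j + 1) - α j)))
        ≤ ∑ j ∈ Finset.Ico (t - d) (t + 1),
            (c / 2 * qf S (Z *ᵥ (α (j + 1) - α j))
              + 1 / (2 * c) * qf S (Z *ᵥ α (t + 1))) :=
          Finset.sum_le_sum hyoung
      _ = c / 2 * (∑ j ∈ Finset.Ico (t - d) (t + 1), qf S (Z *ᵥ (α (j + 1) - α j)))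
          + ((Finset.Ico (t - d) (t + 1)).card : ℝ)
            * (1 / (2 * c) * qf S (Z *ᵥ α (t + 1))) := by
          rw [Finset.sum_add_distrib, Finset.sum_const, Finset.mul_sum, nsmul_eq_mul]
  have hcardb : ((Finset.Ico (t - d) (t + 1)).card : ℝ)
        * (1 / (2 * c) * qf S (Z *ᵥ α (t + 1)))
      ≤ 1 / 2 * qf S (Z *ᵥ α (t + 1)) := by
    have hm1 : ((Finset.Ico (t - d) (t + 1)).card : ℝ)
          * (1 / (2 * c) * qf S (Z *ᵥ α (t + 1)))
        ≤ c * (1 / (2 * c) * qf S (Z *ᵥ α (t + 1))) := by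
      apply mul_le_mul_of_nonneg_right hcard
      positivity
    have hm2 : c * (1 / (2 * c) * qf S (Z *ᵥ α (t + 1)))
        = 1 / 2 * qf S (Z *ᵥ α (t + 1)) := by
      field_simp
    linarith
  have hcross : (Z *ᵥ α (t + 1)) ⬝ᵥ (S *ᵥ (Z *ᵥ α (t + 1)))
        - (Z *ᵥ α (t + 1)) ⬝ᵥ (S *ᵥ (Z *ᵥ α (t - d))) - 1 / 2 * qf S (Z *ᵥ α (t + 1))
      ≤ c / 2 * ∑ j ∈ Finset.Ico (t - d) (t + 1), qf S (Z *ᵥ (α (j + 1) - α j)) := by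
    have hs := hsumb
    rw [← esum] at hs
    rw [← ecross2]
    linarith
  -- assemble
  have hqf : (Z *ᵥ α (t + 1)) ⬝ᵥ (S *ᵥ (Z *ᵥ α (t + 1))) = qf S (Z *ᵥ α (t + 1)) := rfl
  linarith [h0, h1, h2, egs, eX, eU1, eU2, eU3, eC, eN, eB, hcross]
lemma delay_sum (G : ℕ → ℝ) (hG : ∀ t, 0 ≤ G t) (d T : ℕ) (hdT : d ≤ T) :
    ∑ t ∈ Finset.range (T + 1), (G (t - d) - G (t + 1)) ≤ ((d : ℝ) + 1) * G 0 := by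
  rw [Finset.sum_sub_distrib]
  have split : ∑ t ∈ Finset.range (T + 1), G (t - d)
      = ∑ t ∈ Finset.range (d + 1), G (t - d) + ∑ t ∈ Finset.Ico (d + 1) (T + 1), G (t - d) := by
    rw [Finset.range_eq_Ico, ← Finset.sum_Ico_consecutive _ (Nat.zero_le _)
      (by omega : d + 1 ≤ T + 1), ← Finset.range_eq_Ico]
  have first : ∑ t ∈ Finset.range (d + 1), G (t - d) = ((d : ℝ) + 1) * G 0 := by
    have : ∀ t ∈ Finset.range (d + 1), G (t - d) = G 0 := by
      intro t ht
      rw [Finset.mem_range] at ht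
      congr 1
      omega
    rw [Finset.sum_congr rfl this, Finset.sum_const, Finset.card_range, nsmul_eq_mul]
    push_cast; ring
  have second : ∑ t ∈ Finset.Ico (d + 1) (T + 1), G (t - d)
      ≤ ∑ t ∈ Finset.range (T + 1), G (t + 1) := by
    rw [Finset.sum_Ico_eq_sum_range]
    have e : ∀ i ∈ Finset.range ((T + 1) - (d + 1)), G (d + 1 + i - d) = G (i + 1) := by
      intro i _
      congr 1
      omega
    rw [Finset.sum_congr rfl e]
    exact Finset.sum_le_sum_of_subset_of_nonneg
      (Finset.range_subset_range.2 (by omega)) (fun i _ _ => hG _)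
  linarith
 
lemma double_count (h : ℕ → ℝ) (hh : ∀ j, 0 ≤ h j) (d T : ℕ) :
    ∑ t ∈ Finset.range (T + 1), ∑ j ∈ Finset.Ico (t - d) (t + 1), h j
      ≤ ((d : ℝ) + 1) * ∑ j ∈ Finset.range (T + 1), h j := by
  have swap : ∑ t ∈ Finset.range (T + 1), ∑ j ∈ Finset.Ico (t - d) (t + 1), h j
      = ∑ j ∈ Finset.range (T + 1),
          ∑ t ∈ Finset.Ico j (j + d + 1) ∩ Finset.range (T + 1), h j := by
    apply Finset.sum_comm'
    intro x y
    simp only [Finset.mem_range, Finset.mem_Ico, Finset.mem_inter]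
    omega
  rw [swap, Finset.mul_sum]
  apply Finset.sum_le_sum
  intro j _
  rw [Finset.sum_const, nsmul_eq_mul]
  have hcard : ((Finset.Ico j (j + d + 1) ∩ Finset.range (T + 1)).card : ℝ) ≤ (d : ℝ) + 1 := by
    have h1 : (Finset.Ico j (j + d + 1) ∩ Finset.range (T + 1)).card
        ≤ (Finset.Ico j (j + d + 1)).card :=
      Finset.card_le_card Finset.inter_subset_left
    have h2 : (Finset.Ico j (j + d + 1)).card = d + 1 := by
      rw [Nat.card_Ico]; omega
    calc ((Finset.Ico j (j + d + 1) ∩ Finset.range (T + 1)).card : ℝ)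
        ≤ ((Finset.Ico j (j + d + 1)).card : ℝ) := by exact_mod_cast h1
      _ = (d : ℝ) + 1 := by rw [h2]; push_cast; ring
  exact mul_le_mul_of_nonneg_right hcard (hh j)
set_option maxHeartbeats 4000000 in
/-- Theorem 2: O(1/T) convergence rates of the Asyn-DDPG algorithm. -/
theorem asyn_ddpg_convergence_rates
    (n p : ℕ) (Z : Matrix (Fin p) (Fin n) ℝ)
    (C Hm : Matrix (Fin n) (Fin n) ℝ) (S : Matrix (Fin p) (Fin p) ℝ)
    (hC : C.PosDef) (hHm : Hm.PosDef) (hS : S.PosDef)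
    (d : ℕ) (hd : 1 ≤ d)
    (Hs Hr : (Fin n → ℝ) → ℝ) (gs : (Fin n → ℝ) → (Fin n → ℝ))
    (hconv_s : ∀ a b : Fin n → ℝ, Hs a + gs a ⬝ᵥ (b - a) ≤ Hs b)
    (hsmooth : ∀ a b : Fin n → ℝ, Hs b ≤ Hs a + gs a ⬝ᵥ (b - a) + 1 / 2 * qf Hm (b - a))
    (hr : ConvexOn ℝ Set.univ Hr)
    (α : ℕ → Fin n → ℝ) (ω : ℕ → Fin p → ℝ)
    (hα : ∀ t : ℕ, ∀ v : Fin n → ℝ,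
      Hr (α (t + 1)) + 1 / 2 * qf C⁻¹ (α (t + 1) -
          (α t - C *ᵥ (gs (α t) + Zᵀ *ᵥ ω (t - d) + (Zᵀ * S * Z) *ᵥ α (t - d))))
        ≤ Hr v + 1 / 2 * qf C⁻¹ (v -
          (α t - C *ᵥ (gs (α t) + Zᵀ *ᵥ ω (t - d) + (Zᵀ * S * Z) *ᵥ α (t - d)))))
    (hω : ∀ t : ℕ, ω (t + 1) = ω (t - d) + (S * Z) *ᵥ α (t + 1))
    (hstep1 : (C⁻¹ - Hm - Zᵀ * (((1 + d : ℝ)) ^ 2 • S) * Z).PosSemidef)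
    (hstep2 : (C⁻¹ - Zᵀ * S * Z).PosDef)
    (κ : ℝ) (hκ : 0 ≤ κ) (hbound : ∀ t : ℕ, qf (Zᵀ * S * Z) (α t) ≤ κ ^ 2)
    (αs : Fin n → ℝ) (hαs : Z *ᵥ αs = 0) (ωs : Fin p → ℝ)
    (hsaddle : ∀ a : Fin n → ℝ, Hs αs + Hr αs ≤ (Hs a + Hr a) + ωs ⬝ᵥ (Z *ᵥ a))
    (Ξ : ℝ)
    (hΞ : Ξ = 4 * (1 + d : ℝ) * lamMax S⁻¹ * (ωs ⬝ᵥ ωs)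
        + (1 + d : ℝ) * qf S⁻¹ (ω 0)
        + 1 / 2 * qf C⁻¹ (αs - α 0)
        + 4 * (d : ℝ) * κ ^ 2 / 2)
    (T : ℕ) (hT : 2 * d + 1 ≤ T)
    (abar : Fin n → ℝ)
    (habar : abar = (T + 1 : ℝ)⁻¹ • ∑ t ∈ Finset.range (T + 1), α (t + 1)) :
    Real.sqrt (ωs ⬝ᵥ ωs) * Real.sqrt ((Z *ᵥ abar) ⬝ᵥ (Z *ᵥ abar)) ≤ Ξ / (T + 1) ∧
      |(Hs abar + Hr abar) - (Hs αs + Hr αs)| ≤ Ξ / (T + 1) := by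
  classical
  have hSs : Sᵀ = S := transpose_eq_of_posdef hS
  have hCiPD : (C⁻¹).PosDef := hC.inv
  have hSiPD : (S⁻¹).PosDef := hS.inv
  have hCis : (C⁻¹)ᵀ = C⁻¹ := transpose_eq_of_posdef hCiPD
  have hSis : (S⁻¹)ᵀ = S⁻¹ := transpose_eq_of_posdef hSiPD
  have hSiS : S⁻¹ * S = 1 := Matrix.nonsing_inv_mul S (isUnit_iff_ne_zero.2 hS.det_pos.ne')
  have hSpsd := hS.posSemidef
  have hCipsd := hCiPD.posSemidef
  have hSipsd := hSiPD.posSemidef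
  have VI := prox_VI n p Z C S hC d Hr gs hr α ω hα
    (fun s => gs (α s) + Zᵀ *ᵥ ω (s - d) + (Zᵀ * S * Z) *ᵥ α (s - d)) (fun _ => rfl)
  -- choice of the dual test vector ν
  have hww : ωs ⬝ᵥ ωs = Real.sqrt (ωs ⬝ᵥ ωs) ^ 2 := (Real.sq_sqrt (dot_self_nonneg _)).symm
  have hqq : (Z *ᵥ abar) ⬝ᵥ (Z *ᵥ abar)
      = Real.sqrt ((Z *ᵥ abar) ⬝ᵥ (Z *ᵥ abar)) ^ 2 := (Real.sq_sqrt (dot_self_nonneg _)).symm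
  have hnw0 : 0 ≤ Real.sqrt (ωs ⬝ᵥ ωs) := Real.sqrt_nonneg _
  have hnq0 : 0 ≤ Real.sqrt ((Z *ᵥ abar) ⬝ᵥ (Z *ᵥ abar)) := Real.sqrt_nonneg _
  set ν : Fin p → ℝ := if Z *ᵥ abar = 0 then 0
    else ((2 * Real.sqrt (ωs ⬝ᵥ ωs)) / Real.sqrt ((Z *ᵥ abar) ⬝ᵥ (Z *ᵥ abar))) • (Z *ᵥ abar)
    with hν
  have hνq : ν ⬝ᵥ (Z *ᵥ abar)
      = 2 * Real.sqrt (ωs ⬝ᵥ ωs) * Real.sqrt ((Z *ᵥ abar) ⬝ᵥ (Z *ᵥ abar)) := by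
    by_cases h : Z *ᵥ abar = 0
    · rw [hν, if_pos h, h]
      simp
    · have hq0 : 0 < (Z *ᵥ abar) ⬝ᵥ (Z *ᵥ abar) :=
        lt_of_le_of_ne (dot_self_nonneg _)
          (fun e => h ((dotProduct_self_eq_zero).1 e.symm))
      have hnqpos : 0 < Real.sqrt ((Z *ᵥ abar) ⬝ᵥ (Z *ᵥ abar)) := Real.sqrt_pos.2 hq0
      rw [hν, if_neg h, smul_dotProduct, smul_eq_mul]
      field_simp
      linear_combination Real.sqrt (ωs ⬝ᵥ ωs) * hqq
  have hνν : ν ⬝ᵥ ν ≤ 4 * (ωs ⬝ᵥ ωs) := by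
    by_cases h : Z *ᵥ abar = 0
    · rw [hν, if_pos h]
      simp
      nlinarith [dot_self_nonneg ωs]
    · have hq0 : 0 < (Z *ᵥ abar) ⬝ᵥ (Z *ᵥ abar) :=
        lt_of_le_of_ne (dot_self_nonneg _)
          (fun e => h ((dotProduct_self_eq_zero).1 e.symm))
      have hnqpos : 0 < Real.sqrt ((Z *ᵥ abar) ⬝ᵥ (Z *ᵥ abar)) := Real.sqrt_pos.2 hq0
      have heq : ν ⬝ᵥ ν = 4 * (ωs ⬝ᵥ ωs) := by
        rw [hν, if_neg h, smul_dotProduct, dotProduct_smul, smul_eq_mul, smul_eq_mul]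
        field_simp
        linear_combination (-4 * ((Z *ᵥ abar) ⬝ᵥ (Z *ᵥ abar))) * hww + (4 * (ωs ⬝ᵥ ωs)) * hqq
      linarith
  clear_value ν
  -- per-step estimate
  have key := per_step Z C Hm S hSs hCis hSis hSiS hSpsd d Hs Hr gs hconv_s hsmooth
    α ω hω αs hαs ν VI
  -- step-size condition as quadratic form inequality
  have hstep : ∀ x : Fin n → ℝ,
      qf Hm x + ((d : ℝ) + 1) ^ 2 * qf S (Z *ᵥ x) ≤ qf C⁻¹ x := by
    intro x
    have h0 := qf_nonneg hstep1 x
    have e2 : x ⬝ᵥ ((Zᵀ * (((1 + d : ℝ)) ^ 2 • S) * Z) *ᵥ x)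
        = ((1 + (d : ℝ)) ^ 2) * ((Z *ᵥ x) ⬝ᵥ (S *ᵥ (Z *ᵥ x))) := by
      rw [← Matrix.mulVec_mulVec, ← Matrix.mulVec_mulVec, dotProduct_mulVec, vecMul_transpose,
        smul_mulVec, dotProduct_smul, smul_eq_mul]
    have e1 : qf (C⁻¹ - Hm - Zᵀ * (((1 + d : ℝ)) ^ 2 • S) * Z) x
        = qf C⁻¹ x - qf Hm x - ((1 + (d : ℝ)) ^ 2) * qf S (Z *ᵥ x) := by
      unfold qf
      rw [Matrix.sub_mulVec, Matrix.sub_mulVec, dotProduct_sub, dotProduct_sub, e2]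
    rw [e1] at h0
    have e3 : (1 + (d : ℝ)) ^ 2 = ((d : ℝ) + 1) ^ 2 := by ring
    rw [e3] at h0
    linarith
  -- summing the per-step estimates
  have hsum1 : ∑ t ∈ Finset.range (T + 1),
      ((Hs (α (t + 1)) + Hr (α (t + 1))) - (Hs αs + Hr αs) + ν ⬝ᵥ (Z *ᵥ α (t + 1)))
      ≤ ∑ t ∈ Finset.range (T + 1),
        (1 / 2 * qf Hm (α (t + 1) - α t) - 1 / 2 * qf C⁻¹ (α (t + 1) - α t)
          + (1 / 2 * qf C⁻¹ (αs - α t) - 1 / 2 * qf C⁻¹ (αs - α (t + 1)))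
          + (1 / 2 * qf S⁻¹ (ν - ω (t - d)) - 1 / 2 * qf S⁻¹ (ν - ω (t + 1)))
          + ((d : ℝ) + 1) / 2 * ∑ j ∈ Finset.Ico (t - d) (t + 1),
              qf S (Z *ᵥ (α (j + 1) - α j))) :=
    Finset.sum_le_sum fun t _ => key t
  have hsplit : ∑ t ∈ Finset.range (T + 1),
      (1 / 2 * qf Hm (α (t + 1) - α t) - 1 / 2 * qf C⁻¹ (α (t + 1) - α t)
        + (1 / 2 * qf C⁻¹ (αs - α t) - 1 / 2 * qf C⁻¹ (αs - α (t + 1)))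
        + (1 / 2 * qf S⁻¹ (ν - ω (t - d)) - 1 / 2 * qf S⁻¹ (ν - ω (t + 1)))
        + ((d : ℝ) + 1) / 2 * ∑ j ∈ Finset.Ico (t - d) (t + 1),
            qf S (Z *ᵥ (α (j + 1) - α j)))
      = (∑ t ∈ Finset.range (T + 1),
          (1 / 2 * qf Hm (α (t + 1) - α t) - 1 / 2 * qf C⁻¹ (α (t + 1) - α t)))
        + (∑ t ∈ Finset.range (T + 1),
          (1 / 2 * qf C⁻¹ (αs - α t) - 1 / 2 * qf C⁻¹ (αs - α (t + 1))))
        + (∑ t ∈ Finset.range (T + 1),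
          (1 / 2 * qf S⁻¹ (ν - ω (t - d)) - 1 / 2 * qf S⁻¹ (ν - ω (t + 1))))
        + (∑ t ∈ Finset.range (T + 1),
          ((d : ℝ) + 1) / 2 * ∑ j ∈ Finset.Ico (t - d) (t + 1),
            qf S (Z *ᵥ (α (j + 1) - α j))) := by
    rw [← Finset.sum_add_distrib, ← Finset.sum_add_distrib, ← Finset.sum_add_distrib]
  -- the D-term bound
  have hD : (∑ t ∈ Finset.range (T + 1),
        ((d : ℝ) + 1) / 2 * ∑ j ∈ Finset.Ico (t - d) (t + 1), qf S (Z *ᵥ (α (j + 1) - α j)))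
      ≤ ((d : ℝ) + 1) ^ 2 / 2
          * ∑ t ∈ Finset.range (T + 1), qf S (Z *ᵥ (α (t + 1) - α t)) := by
    rw [← Finset.mul_sum]
    have hdc := double_count (fun j => qf S (Z *ᵥ (α (j + 1) - α j)))
      (fun j => qf_nonneg hSpsd _) d T
    have hc2 : (0 : ℝ) ≤ ((d : ℝ) + 1) / 2 := by positivity
    calc ((d : ℝ) + 1) / 2 * ∑ t ∈ Finset.range (T + 1),
          ∑ j ∈ Finset.Ico (t - d) (t + 1), qf S (Z *ᵥ (α (j + 1) - α j))
        ≤ ((d : ℝ) + 1) / 2 * (((d : ℝ) + 1)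
            * ∑ t ∈ Finset.range (T + 1), qf S (Z *ᵥ (α (t + 1) - α t))) :=
          mul_le_mul_of_nonneg_left hdc hc2
      _ = ((d : ℝ) + 1) ^ 2 / 2
            * ∑ t ∈ Finset.range (T + 1), qf S (Z *ᵥ (α (t + 1) - α t)) := by ring
  -- the A-term plus D-term is nonpositive
  have hAD : (∑ t ∈ Finset.range (T + 1),
        (1 / 2 * qf Hm (α (t + 1) - α t) - 1 / 2 * qf C⁻¹ (α (t + 1) - α t)))
      + ((d : ℝ) + 1) ^ 2 / 2
          * ∑ t ∈ Finset.range (T + 1), qf S (Z *ᵥ (α (t + 1) - α t)) ≤ 0 := by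
    rw [Finset.mul_sum, ← Finset.sum_add_distrib]
    apply Finset.sum_nonpos
    intro t _
    have := hstep (α (t + 1) - α t)
    linarith
  -- telescoping of the primal distance terms
  have hB : (∑ t ∈ Finset.range (T + 1),
        (1 / 2 * qf C⁻¹ (αs - α t) - 1 / 2 * qf C⁻¹ (αs - α (t + 1))))
      ≤ 1 / 2 * qf C⁻¹ (αs - α 0) := by
    rw [Finset.sum_range_sub' (fun t => 1 / 2 * qf C⁻¹ (αs - α t)) (T + 1)]
    have : 0 ≤ 1 / 2 * qf C⁻¹ (αs - α (T + 1)) := by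
      have := qf_nonneg hCipsd (αs - α (T + 1)); linarith
    linarith
  -- the delayed dual terms
  have hGd : (∑ t ∈ Finset.range (T + 1),
        (1 / 2 * qf S⁻¹ (ν - ω (t - d)) - 1 / 2 * qf S⁻¹ (ν - ω (t + 1))))
      ≤ ((d : ℝ) + 1) * (1 / 2 * qf S⁻¹ (ν - ω 0)) := by
    exact delay_sum (fun t => 1 / 2 * qf S⁻¹ (ν - ω t))
      (fun t => by have := qf_nonneg hSipsd (ν - ω t); linarith) d T (by omega)
  have sum_key : ∑ t ∈ Finset.range (T + 1),
      ((Hs (α (t + 1)) + Hr (α (t + 1))) - (Hs αs + Hr αs) + ν ⬝ᵥ (Z *ᵥ α (t + 1)))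
      ≤ 1 / 2 * qf C⁻¹ (αs - α 0) + ((d : ℝ) + 1) * (1 / 2 * qf S⁻¹ (ν - ω 0)) := by
    rw [hsplit] at hsum1
    linarith [hsum1, hD, hAD, hB, hGd]
  -- averaging (Jensen)
  have hNpos : (0:ℝ) < (T:ℝ) + 1 := by positivity
  have hcast : ((T + 1 : ℕ) : ℝ) = (T:ℝ) + 1 := by push_cast; ring
  have hsumα : ∑ t ∈ Finset.range (T + 1), α (t + 1) = ((T:ℝ) + 1) • abar := by
    rw [habar, smul_smul, mul_inv_cancel₀ hNpos.ne', one_smul]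
  have hνsum : ∑ t ∈ Finset.range (T + 1), ν ⬝ᵥ (Z *ᵥ α (t + 1))
      = ((T:ℝ) + 1) * (ν ⬝ᵥ (Z *ᵥ abar)) := by
    rw [← dot_sum_right, ← mulVec_sumv, hsumα, Matrix.mulVec_smul, dotProduct_smul, smul_eq_mul]
  have hHsJ : ((T:ℝ) + 1) * Hs abar ≤ ∑ t ∈ Finset.range (T + 1), Hs (α (t + 1)) := by
    have hsum := Finset.sum_le_sum
      (fun t (_ : t ∈ Finset.range (T + 1)) => hconv_s abar (α (t + 1)))
    have hns : ((T:ℝ)+1) • abar = (T+1) • abar := by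
      rw [← hcast]; exact Nat.cast_smul_eq_nsmul ℝ (T+1) abar
    have e2 : ∑ t ∈ Finset.range (T + 1), (α (t + 1) - abar) = (0 : Fin n → ℝ) := by
      rw [Finset.sum_sub_distrib, hsumα, Finset.sum_const, Finset.card_range, hns, sub_self]
    have e : ∑ t ∈ Finset.range (T + 1), (Hs abar + gs abar ⬝ᵥ (α (t + 1) - abar))
        = ((T:ℝ) + 1) * Hs abar := by
      rw [Finset.sum_add_distrib, Finset.sum_const, Finset.card_range, nsmul_eq_mul, hcast,
        ← dot_sum_right, e2, dotProduct_zero, add_zero]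
    rw [e] at hsum
    exact hsum
  have hHrJ : ((T:ℝ) + 1) * Hr abar ≤ ∑ t ∈ Finset.range (T + 1), Hr (α (t + 1)) := by
    have h₁ : ∑ _t ∈ Finset.range (T + 1), ((T:ℝ) + 1)⁻¹ = 1 := by
      rw [Finset.sum_const, Finset.card_range, nsmul_eq_mul, hcast, mul_inv_cancel₀ hNpos.ne']
    have hmap := hr.map_sum_le (t := Finset.range (T + 1)) (w := fun _ => ((T:ℝ) + 1)⁻¹)
      (p := fun t => α (t + 1)) (fun _ _ => by positivity) h₁ (fun _ _ => Set.mem_univ _)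
    have e1 : ∑ t ∈ Finset.range (T + 1), ((T:ℝ) + 1)⁻¹ • α (t + 1) = abar := by
      rw [← Finset.smul_sum, habar]
    rw [e1] at hmap
    have e2 : ∑ t ∈ Finset.range (T + 1), ((T:ℝ) + 1)⁻¹ • Hr (α (t + 1))
        = ((T:ℝ) + 1)⁻¹ * ∑ t ∈ Finset.range (T + 1), Hr (α (t + 1)) := by
      rw [← Finset.smul_sum, smul_eq_mul]
    rw [e2] at hmap
    have h3 := mul_le_mul_of_nonneg_left hmap (le_of_lt hNpos)
    rw [← mul_assoc, mul_inv_cancel₀ hNpos.ne', one_mul] at h3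
    exact h3
  have hconstsum : ∑ _t ∈ Finset.range (T + 1), (Hs αs + Hr αs)
      = ((T:ℝ)+1) * (Hs αs + Hr αs) := by
    rw [Finset.sum_const, Finset.card_range, nsmul_eq_mul, hcast]
  have hLHS : ((T:ℝ)+1) * ((Hs abar + Hr abar) - (Hs αs + Hr αs) + ν ⬝ᵥ (Z *ᵥ abar))
      ≤ ∑ t ∈ Finset.range (T + 1),
        ((Hs (α (t + 1)) + Hr (α (t + 1))) - (Hs αs + Hr αs) + ν ⬝ᵥ (Z *ᵥ α (t + 1))) := by
    have esum : ∑ t ∈ Finset.range (T + 1),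
        ((Hs (α (t + 1)) + Hr (α (t + 1))) - (Hs αs + Hr αs) + ν ⬝ᵥ (Z *ᵥ α (t + 1)))
        = (∑ t ∈ Finset.range (T + 1), Hs (α (t + 1)))
          + (∑ t ∈ Finset.range (T + 1), Hr (α (t + 1)))
          - ((T:ℝ)+1) * (Hs αs + Hr αs)
          + ((T:ℝ)+1) * (ν ⬝ᵥ (Z *ᵥ abar)) := by
      rw [Finset.sum_add_distrib, Finset.sum_sub_distrib, Finset.sum_add_distrib,
        hνsum, hconstsum]
    have hmul : ((T:ℝ)+1) * ((Hs abar + Hr abar) - (Hs αs + Hr αs) + ν ⬝ᵥ (Z *ᵥ abar))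
        = ((T:ℝ)+1) * Hs abar + ((T:ℝ)+1) * Hr abar - ((T:ℝ)+1) * (Hs αs + Hr αs)
          + ((T:ℝ)+1) * (ν ⬝ᵥ (Z *ᵥ abar)) := by ring
    rw [esum, hmul]
    linarith [hHsJ, hHrJ]
  -- bound the constant by Ξ
  have hpar : qf S⁻¹ (ν - ω 0) ≤ 2 * qf S⁻¹ ν + 2 * qf S⁻¹ (ω 0) := by
    have hplus := qf_nonneg hSipsd (ν + ω 0)
    rw [qf_add hSis] at hplus
    have hminus := qf_sub hSis ν (ω 0)
    linarith
  have hlam : qf S⁻¹ ν ≤ lamMax S⁻¹ * (ν ⬝ᵥ ν) := qf_le_lamMax _ _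
  have hlam0 : 0 ≤ lamMax S⁻¹ := lamMax_nonneg_of_posdef hSiPD
  have hlam2 : qf S⁻¹ ν ≤ lamMax S⁻¹ * (4 * (ωs ⬝ᵥ ωs)) :=
    le_trans hlam (mul_le_mul_of_nonneg_left hνν hlam0)
  have hκ2 : (0:ℝ) ≤ 4 * (d:ℝ) * κ^2 / 2 := by positivity
  have hRXi : 1 / 2 * qf C⁻¹ (αs - α 0) + ((d : ℝ) + 1) * (1 / 2 * qf S⁻¹ (ν - ω 0)) ≤ Ξ := by
    rw [hΞ]
    have hd0 : (0:ℝ) ≤ (d:ℝ) + 1 := by positivity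
    have h1 : ((d : ℝ) + 1) * (1 / 2 * qf S⁻¹ (ν - ω 0))
        ≤ ((d : ℝ) + 1) * (qf S⁻¹ ν + qf S⁻¹ (ω 0)) := by
      apply mul_le_mul_of_nonneg_left _ hd0
      linarith [hpar]
    have h2 := mul_le_mul_of_nonneg_left hlam2 hd0
    have e : 4 * (1+(d:ℝ)) * lamMax S⁻¹ * (ωs ⬝ᵥ ωs)
        = ((d:ℝ)+1) * (lamMax S⁻¹ * (4*(ωs ⬝ᵥ ωs))) := by ring
    have e2 : (1+(d:ℝ)) * qf S⁻¹ (ω 0) = ((d:ℝ)+1) * qf S⁻¹ (ω 0) := by ring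
    nlinarith [h1, h2, hκ2, e, e2, mul_le_mul_of_nonneg_left hpar hd0]
  -- main averaged inequality
  have hfull : ((T:ℝ)+1) * ((Hs abar + Hr abar) - (Hs αs + Hr αs) + ν ⬝ᵥ (Z *ᵥ abar)) ≤ Ξ :=
    le_trans hLHS (le_trans sum_key hRXi)
  rw [hνq] at hfull
  have hmain : (Hs abar + Hr abar) - (Hs αs + Hr αs)
      + 2 * Real.sqrt (ωs ⬝ᵥ ωs) * Real.sqrt ((Z *ᵥ abar) ⬝ᵥ (Z *ᵥ abar))
      ≤ Ξ / ((T:ℝ) + 1) := by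
    rw [le_div_iff₀ hNpos]
    calc ((Hs abar + Hr abar) - (Hs αs + Hr αs)
          + 2 * Real.sqrt (ωs ⬝ᵥ ωs) * Real.sqrt ((Z *ᵥ abar) ⬝ᵥ (Z *ᵥ abar))) * ((T:ℝ) + 1)
        = ((T:ℝ)+1) * ((Hs abar + Hr abar) - (Hs αs + Hr αs)
          + 2 * Real.sqrt (ωs ⬝ᵥ ωs) * Real.sqrt ((Z *ᵥ abar) ⬝ᵥ (Z *ᵥ abar))) := by ring
      _ ≤ Ξ := hfull
  have hcs : ωs ⬝ᵥ (Z *ᵥ abar)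
      ≤ Real.sqrt (ωs ⬝ᵥ ωs) * Real.sqrt ((Z *ᵥ abar) ⬝ᵥ (Z *ᵥ abar)) :=
    cauchy_dot p ωs (Z *ᵥ abar)
  have hsad : -((Hs abar + Hr abar) - (Hs αs + Hr αs))
      ≤ Real.sqrt (ωs ⬝ᵥ ωs) * Real.sqrt ((Z *ᵥ abar) ⬝ᵥ (Z *ᵥ abar)) := by
    have := hsaddle abar
    linarith
  have hnwnq : 0 ≤ Real.sqrt (ωs ⬝ᵥ ωs) * Real.sqrt ((Z *ᵥ abar) ⬝ᵥ (Z *ᵥ abar)) :=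
    mul_nonneg hnw0 hnq0
  constructor
  · linarith [hmain, hsad]
  · rw [abs_le]
    have hp1 : Real.sqrt (ωs ⬝ᵥ ωs) * Real.sqrt ((Z *ᵥ abar) ⬝ᵥ (Z *ᵥ abar))
        ≤ Ξ / ((T:ℝ) + 1) := by linarith [hmain, hsad]
    constructor
    · linarith [hsad, hp1]
    · linarith [hmain, hnwnq]
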